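/- In a hyperbolic triangle with sides l_i, l_j, l_k and opposite angles ϑ_i, ϑ_j, ϑ_k, one has cos ϑ_i + cos ϑ_j = sinh(l_i + l_j)·(cosh l_k − cosh(l_i − l_j)) / (sinh l_i sinh l_j sinh l_k), and consequently 0 < cos ϑ_i + cos ϑ_j ≤ sinh(l_i + l_j) sinh(l_k/2) / (sinh l_i sinh l_j cosh(l_k/2)). -/

import Mathlib

open Real

theorem cos_angle_sum_formula_and_bound
    (li lj lk ϑi ϑj ϑk : ℝ)
    (hli : 0 < li) (hlj : 0 < lj) (hlk : 0 < lk)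
    (htri1 : li < lj + lk) (htri2 : lj < lk + li) (htri3 : lk < li + lj)
    (hϑi : ϑi ∈ Set.Ioo 0 π) (hϑj : ϑj ∈ Set.Ioo 0 π) (hϑk : ϑk ∈ Set.Ioo 0 π)
    (hcosi : Real.cos ϑi = (Real.cosh lj * Real.cosh lk - Real.cosh li) / (Real.sinh lj * Real.sinh lk))
    (hcosj : Real.cos ϑj = (Real.cosh lk * Real.cosh li - Real.cosh lj) / (Real.sinh lk * Real.sinh li))
    (hcosk : Real.cos ϑk = (Real.cosh li * Real.cosh lj - Real.cosh lk) / (Real.sinh li * Real.sinh lj)) :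
    Real.cos ϑi + Real.cos ϑj
        = Real.sinh (li + lj) * (Real.cosh lk - Real.cosh (li - lj))
          / (Real.sinh li * Real.sinh lj * Real.sinh lk) ∧
    0 < Real.cos ϑi + Real.cos ϑj ∧
    Real.cos ϑi + Real.cos ϑj
      ≤ Real.sinh (li + lj) * Real.sinh (lk / 2)
        / (Real.sinh li * Real.sinh lj * Real.cosh (lk / 2)) := by
  have si : 0 < Real.sinh li := Real.sinh_pos_iff.2 hli
  have sj : 0 < Real.sinh lj := Real.sinh_pos_iff.2 hlj
  have sk : 0 < Real.sinh lk := Real.sinh_pos_iff.2 hlk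
  have hi2 : Real.cosh li ^ 2 = 1 + Real.sinh li ^ 2 := by
    nlinarith [Real.cosh_sq_sub_sinh_sq li]
  have hj2 : Real.cosh lj ^ 2 = 1 + Real.sinh lj ^ 2 := by
    nlinarith [Real.cosh_sq_sub_sinh_sq lj]
  have hden : 0 < Real.sinh li * Real.sinh lj * Real.sinh lk := by
    exact mul_pos (mul_pos si sj) sk
  have hnum : (Real.cosh lj * Real.cosh lk - Real.cosh li) * Real.sinh li
      + (Real.cosh lk * Real.cosh li - Real.cosh lj) * Real.sinh lj
      = Real.sinh (li + lj) * (Real.cosh lk - Real.cosh (li - lj)) := by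
    rw [Real.sinh_add, Real.cosh_sub]
    linear_combination (Real.sinh lj * Real.cosh lj) * hi2
      + (Real.sinh li * Real.cosh li) * hj2
  have heq : Real.cos ϑi + Real.cos ϑj
      = Real.sinh (li + lj) * (Real.cosh lk - Real.cosh (li - lj))
        / (Real.sinh li * Real.sinh lj * Real.sinh lk) := by
    rw [hcosi, hcosj, ← hnum]
    field_simp
  have hsij : 0 < Real.sinh (li + lj) := Real.sinh_pos_iff.2 (by linarith)
  have hcpos : Real.cosh (li - lj) < Real.cosh lk := by
    rw [Real.cosh_lt_cosh, abs_of_pos hlk]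
    exact abs_sub_lt_iff.2 ⟨by linarith, by linarith⟩
  refine ⟨heq, ?_, ?_⟩
  · rw [heq]
    exact div_pos (mul_pos hsij (by linarith)) hden
  · rw [heq]
    have hck : 0 < Real.cosh (lk / 2) := Real.cosh_pos _
    have hsk2 : 0 < Real.sinh (lk / 2) := Real.sinh_pos_iff.2 (by linarith)
    have hskeq : Real.sinh lk = 2 * Real.sinh (lk / 2) * Real.cosh (lk / 2) := by
      have := Real.sinh_two_mul (lk / 2)
      rw [show 2 * (lk / 2) = lk by ring] at this
      linarith
    have hceq : Real.cosh lk - 1 = 2 * Real.sinh (lk / 2) ^ 2 := by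
      have h1 := Real.cosh_two_mul (lk / 2)
      rw [show 2 * (lk / 2) = lk by ring] at h1
      have h2 := Real.cosh_sq (lk / 2)
      nlinarith
    have hle : Real.cosh lk - Real.cosh (li - lj) ≤ 2 * Real.sinh (lk / 2) ^ 2 := by
      have : (1 : ℝ) ≤ Real.cosh (li - lj) := Real.one_le_cosh _
      linarith
    rw [hskeq, div_le_div_iff₀ (by positivity) (mul_pos (mul_pos si sj) hck)]
    refine le_trans (mul_le_mul_of_nonneg_right
      (mul_le_mul_of_nonneg_left hle hsij.le)
      (mul_pos (mul_pos si sj) hck).le) (le_of_eq ?_)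
    ring
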